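/- Suppose the bandwidth sequence is constant: α_n = α for all n ≥ 1, with α > 0. Then Σ_n converges to α·R as n → ∞, and the convergence is exponentially fast: there exists a constant C > 0 such that ‖Σ_n − α R‖ ≤ C (1+α)^{-n} for all n ≥ 1. In particular, for any finite bandwidth factor α > 0 the covariance of the regularized particle filter remains bounded below (in the Loewner order, asymptotically) by the positive definite matrix α R, no matter how many observations are processed. -/

import Mathlib

open Matrix Finset Filter

attribute [local instance] Matrix.normedAddCommGroup
attribute [local instance] Matrix.normedSpace

namespace RPFAux

variable {d : ℕ}

lemma posDef_smul {M : Matrix (Fin d) (Fin d) ℝ} {c : ℝ} (hM : M.PosDef) (hc : 0 < c) :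
    (c • M).PosDef := by
  refine ⟨?_, fun x hx => ?_⟩
  · show (c • M)ᴴ = c • M
    rw [Matrix.conjTranspose_smul, star_trivial, hM.1]
  · exact (hM.smul hc).2 hx

lemma posSemidef_smul {M : Matrix (Fin d) (Fin d) ℝ} {c : ℝ} (hM : M.PosDef) (hc : 0 ≤ c) :
    (c • M).PosSemidef := by
  refine ⟨?_, fun x => ?_⟩
  · show (c • M)ᴴ = c • M
    rw [Matrix.conjTranspose_smul, star_trivial, hM.1]
  · exact (hM.posSemidef.smul hc).2 x

lemma norm_mul_le_d (A B : Matrix (Fin d) (Fin d) ℝ) : ‖A * B‖ ≤ d * ‖A‖ * ‖B‖ := by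
  have h0 : (0:ℝ) ≤ d * ‖A‖ * ‖B‖ := by positivity
  rw [Matrix.norm_le_iff h0]
  intro i j
  rw [Matrix.mul_apply]
  calc ‖∑ k, A i k * B k j‖ ≤ ∑ k, ‖A i k * B k j‖ := norm_sum_le _ _
    _ ≤ ∑ _k : Fin d, ‖A‖ * ‖B‖ := by
        refine Finset.sum_le_sum fun k _ => ?_
        rw [norm_mul]
        exact mul_le_mul (Matrix.norm_entry_le_entrywise_sup_norm A)
          (Matrix.norm_entry_le_entrywise_sup_norm B) (norm_nonneg _) (norm_nonneg _)
    _ = d * ‖A‖ * ‖B‖ := by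
        simp [Finset.sum_const, mul_assoc]

end RPFAux

theorem stmt_2 {d : ℕ} (hd : 1 ≤ d)
    (R S0 : Matrix (Fin d) (Fin d) ℝ) (hR : R.PosDef) (hS0pd : S0.PosDef)
    (α : ℝ) (hα : 0 < α)
    (S : ℕ → Matrix (Fin d) (Fin d) ℝ) (hS0 : S 0 = S0)
    (hrec : ∀ n, S (n + 1) = (1 + α) • (R * (R + S n)⁻¹ * S n)) :
    Tendsto S atTop (nhds (α • R)) ∧
      ∃ C > 0, ∀ n, 1 ≤ n → ‖S n - α • R‖ ≤ C * ((1 + α) ^ n)⁻¹ := by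
  have hRdet : IsUnit R.det := hR.det_pos.ne'.isUnit
  set Ai : Matrix (Fin d) (Fin d) ℝ := α⁻¹ • R⁻¹ with hAi
  set Dm : Matrix (Fin d) (Fin d) ℝ := S0⁻¹ - Ai with hDm
  have hAipd : Ai.PosDef := RPFAux.posDef_smul hR.inv (inv_pos.2 hα)
  have hS0i : S0⁻¹.PosDef := hS0pd.inv
  have hline : ∀ t ∈ Set.Icc (0:ℝ) 1, (Ai + t • Dm).PosDef := by
    intro t ht
    have heq : Ai + t • Dm = (1 - t) • Ai + t • S0⁻¹ := by
      rw [hDm]; module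
    rw [heq]
    rcases eq_or_lt_of_le ht.1 with h0 | h0
    · rw [← h0]; simpa using hAipd
    · exact Matrix.PosDef.posSemidef_add
        (RPFAux.posSemidef_smul hAipd (by linarith [ht.2]))
        (RPFAux.posDef_smul hS0i h0)
  have h1α : (1:ℝ) < 1 + α := by linarith
  set t : ℕ → ℝ := fun n => ((1 + α) ^ n)⁻¹ with ht
  have htpos : ∀ n, 0 < t n := fun n => by positivity
  have htle : ∀ n, t n ≤ 1 := by
    intro n
    have h1 : (1:ℝ) ≤ (1 + α) ^ n := one_le_pow₀ h1α.le
    simpa [ht] using inv_le_one_of_one_le₀ h1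
  set A : ℕ → Matrix (Fin d) (Fin d) ℝ := fun n => Ai + t n • Dm with hA
  have hApd : ∀ n, (A n).PosDef := fun n => hline (t n) ⟨(htpos n).le, htle n⟩
  -- closed form
  have hcf : ∀ n, S n = (A n)⁻¹ := by
    intro n
    induction n with
    | zero =>
      have hA0 : A 0 = S0⁻¹ := by simp [hA, ht, hDm]
      rw [hA0, Matrix.nonsing_inv_nonsing_inv _ hS0pd.det_pos.ne'.isUnit, hS0]
    | succ n ih =>
      have hSnpd : (S n).PosDef := ih ▸ (hApd n).inv
      have hSninv : (S n)⁻¹ = A n := by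
        rw [ih, Matrix.nonsing_inv_nonsing_inv _ (hApd n).det_pos.ne'.isUnit]
      have key : (S n)⁻¹ + R⁻¹ = (S n)⁻¹ * (R + S n) * R⁻¹ := by
        have h1 : (S n)⁻¹ * (R + S n) = (S n)⁻¹ * R + 1 := by
          rw [Matrix.mul_add, Matrix.nonsing_inv_mul _ hSnpd.det_pos.ne'.isUnit]
        rw [h1, Matrix.add_mul, Matrix.one_mul,
          Matrix.mul_nonsing_inv_cancel_right _ _ hRdet]
      have inv_key : ((S n)⁻¹ + R⁻¹)⁻¹ = R * (R + S n)⁻¹ * S n := by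
        rw [key, Matrix.mul_inv_rev, Matrix.mul_inv_rev,
          Matrix.nonsing_inv_nonsing_inv _ hRdet,
          Matrix.nonsing_inv_nonsing_inv _ hSnpd.det_pos.ne'.isUnit,
          Matrix.mul_assoc]
      have hstep : A (n+1) = (1+α)⁻¹ • (A n + R⁻¹) := by
        simp only [hA, hAi, ht, pow_succ]
        match_scalars <;> field_simp <;> ring
      have hpd : (A n + R⁻¹).PosDef := (hApd n).add hR.inv
      rw [hrec n, ← inv_key, hSninv, hstep]
      symm
      apply Matrix.inv_eq_right_inv
      rw [Matrix.smul_mul, Matrix.mul_smul, smul_smul,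
        inv_mul_cancel₀ (by positivity : (1+α) ≠ 0),
        Matrix.mul_nonsing_inv _ hpd.det_pos.ne'.isUnit, one_smul]
  -- identity
  have hAiR1 : Ai * (α • R) = 1 := by
    rw [hAi, Matrix.smul_mul, Matrix.mul_smul, smul_smul,
      inv_mul_cancel₀ hα.ne', Matrix.nonsing_inv_mul _ hRdet, one_smul]
  have hid : ∀ n, S n - α • R = -(t n • (S n * Dm * (α • R))) := by
    intro n
    have h1 : S n * A n = 1 := by
      rw [hcf n, Matrix.nonsing_inv_mul _ (hApd n).det_pos.ne'.isUnit]
    have h2 : S n * Ai + t n • (S n * Dm) = 1 := by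
      rw [← h1]
      simp only [hA, Matrix.mul_add, Matrix.mul_smul]
    have h3 : S n + t n • (S n * Dm * (α • R)) = α • R := by
      have h4 := congrArg (fun M => M * (α • R)) h2
      simp only [Matrix.add_mul, Matrix.smul_mul, Matrix.one_mul] at h4
      rwa [Matrix.mul_assoc (S n) Ai, hAiR1, Matrix.mul_one] at h4
    rw [eq_sub_of_add_eq' h3, neg_sub]
  -- uniform bound on ‖S n‖
  have hg : ContinuousOn (fun s : ℝ => (Ai + s • Dm)⁻¹) (Set.Icc 0 1) := by
    have hdet : ∀ s ∈ Set.Icc (0:ℝ) 1, det (Ai + s • Dm) ≠ 0 :=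
      fun s hs => (hline s hs).det_pos.ne'
    have hcont : Continuous fun s : ℝ => Ai + s • Dm :=
      continuous_const.add (continuous_id.smul continuous_const)
    have hinv : ∀ s : ℝ, (Ai + s • Dm)⁻¹
        = (det (Ai + s • Dm))⁻¹ • adjugate (Ai + s • Dm) := by
      intro s
      rw [Matrix.inv_def, Ring.inverse_eq_inv']
    simp only [hinv]
    exact ContinuousOn.smul ((hcont.matrix_det.continuousOn).inv₀ hdet)
      hcont.matrix_adjugate.continuousOn
  obtain ⟨Cg, hCg⟩ := isCompact_Icc.exists_bound_of_continuousOn hg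
  have hCg0 : 0 ≤ Cg :=
    le_trans (norm_nonneg _) (hCg 0 ⟨le_refl _, zero_le_one⟩)
  set C : ℝ := d * Cg * ‖Dm * (α • R)‖ + 1 with hC
  have hCaux : 0 ≤ (d:ℝ) * Cg * ‖Dm * (α • R)‖ :=
    mul_nonneg (mul_nonneg (Nat.cast_nonneg d) hCg0) (norm_nonneg _)
  have hCpos : 0 < C := by rw [hC]; linarith
  have hbound : ∀ n : ℕ, ‖S n - α • R‖ ≤ C * t n := by
    intro n
    have hSn_norm : ‖S n‖ ≤ Cg := by
      rw [hcf n]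
      exact hCg (t n) ⟨(htpos n).le, htle n⟩
    rw [hid n, norm_neg, norm_smul, Real.norm_eq_abs, abs_of_pos (htpos n)]
    have hK : ‖S n * Dm * (α • R)‖ ≤ C := by
      rw [Matrix.mul_assoc]
      calc ‖S n * (Dm * (α • R))‖ ≤ d * ‖S n‖ * ‖Dm * (α • R)‖ :=
            RPFAux.norm_mul_le_d _ _
        _ ≤ d * Cg * ‖Dm * (α • R)‖ := by
            apply mul_le_mul_of_nonneg_right _ (norm_nonneg _)
            exact mul_le_mul_of_nonneg_left hSn_norm (Nat.cast_nonneg d)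
        _ ≤ C := by rw [hC]; linarith
    calc t n * ‖S n * Dm * (α • R)‖ ≤ t n * C :=
          mul_le_mul_of_nonneg_left hK (htpos n).le
      _ = C * t n := mul_comm _ _
  have htlim : Tendsto t atTop (nhds 0) := by
    have : t = fun n => ((1 + α)⁻¹) ^ n := by
      funext n; rw [ht]; simp [inv_pow]
    rw [this]
    exact tendsto_pow_atTop_nhds_zero_of_lt_one (by positivity)
      (inv_lt_one_of_one_lt₀ h1α)
  constructor
  · rw [← tendsto_sub_nhds_zero_iff]
    apply squeeze_zero_norm hbound
    simpa using htlim.const_mul C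
  · exact ⟨C, hCpos, fun n _ => hbound n⟩
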